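/- Let (A_n,B_n)_{n≥1} be an i.i.d. sequence of random vectors in ℝ² with E[|A_1|^δ]<1 and E[|B_1|^δ]<∞ for some δ∈(0,1), and let X_0^u := u and X_n^u := A_n X_{n−1}^u + B_n for n≥1. If A_1 > 0 almost surely and B_1/A_1 is unbounded from below (i.e. P(B_1/A_1 < −c) > 0 for every c>0), then almost surely there exists n≥1 with X_n^u < 0, for every initial value u∈ℝ. -/

import Mathlib

set_option linter.unnecessarySimpa false
set_option linter.dupNamespace false
set_option linter.unusedSectionVars false

open MeasureTheory ProbabilityTheory Filter Real
open scoped ENNReal NNReal Topology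

namespace ARAux

/-- deterministic iteration of the random affine recursion -/
def det (u : ℝ) (v : ℕ → ℝ × ℝ) : ℕ → ℝ
  | 0 => u
  | n+1 => (v n).1 * det u v n + (v n).2

lemma det_congr {u : ℝ} {v w : ℕ → ℝ × ℝ} :
    ∀ {n : ℕ}, (∀ i < n, v i = w i) → det u v n = det u w n
  | 0, _ => rfl
  | n+1, h => by
    simp only [det, det_congr (fun i hi => h i (Nat.lt_succ_of_lt hi)),
      h n (Nat.lt_succ_self n)]

lemma measurable_det (u : ℝ) (n : ℕ) : Measurable (fun v : ℕ → ℝ × ℝ => det u v n) := by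
  induction n with
  | zero => exact measurable_const
  | succ n ih =>
    exact (((measurable_pi_apply n).fst).mul ih).add ((measurable_pi_apply n).snd)

/-- truncation: keep coordinates `< m` -/
def trunc (m : ℕ) (v : ℕ → ℝ × ℝ) : ℕ → ℝ × ℝ := fun i => if i < m then v i else 0

/-- mask: keep coordinates in `[m, m+L)` -/
def mask (m L : ℕ) (v : ℕ → ℝ × ℝ) : ℕ → ℝ × ℝ := fun i => if m ≤ i ∧ i < m + L then v i else 0

lemma measurable_trunc (m : ℕ) : Measurable (trunc m) := by
  apply measurable_pi_lambda
  intro i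
  by_cases h : i < m
  · simpa [trunc, h] using measurable_pi_apply i
  · simpa [trunc, h] using measurable_const

lemma measurable_mask (m L : ℕ) : Measurable (mask m L) := by
  apply measurable_pi_lambda
  intro i
  by_cases h : m ≤ i ∧ i < m + L
  · simpa [mask, h] using measurable_pi_apply i
  · simpa [mask, h] using measurable_const

lemma trunc_trunc {m m' : ℕ} (h : m ≤ m') (v : ℕ → ℝ × ℝ) :
    trunc m (trunc m' v) = trunc m v := by
  funext i
  by_cases hi : i < m
  · simp [trunc, hi, lt_of_lt_of_le hi h]
  · simp [trunc, hi]

lemma mask_trunc {m L m' : ℕ} (h : m + L ≤ m') (v : ℕ → ℝ × ℝ) :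
    mask m L (trunc m' v) = mask m L v := by
  funext i
  by_cases hi : m ≤ i ∧ i < m + L
  · simp [mask, trunc, hi, lt_of_lt_of_le hi.2 h]
  · simp [mask, hi]

variable {Ω : Type*} [MeasurableSpace Ω] {μ : Measure Ω} {A B : ℕ → Ω → ℝ}

/-- events determined by coordinates `< m` -/
def Det (A B : ℕ → Ω → ℝ) (m : ℕ) (C : Set Ω) : Prop :=
  ∃ T : Set (ℕ → ℝ × ℝ), MeasurableSet T ∧
    C = {ω | trunc m (fun i => (A i ω, B i ω)) ∈ T}

/-- events determined by coordinates in `[m, m+L)` -/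
def DetIco (A B : ℕ → Ω → ℝ) (m L : ℕ) (C : Set Ω) : Prop :=
  ∃ T : Set (ℕ → ℝ × ℝ), MeasurableSet T ∧
    C = {ω | mask m L (fun i => (A i ω, B i ω)) ∈ T}

lemma measurable_pairs (hAm : ∀ n, Measurable (A n)) (hBm : ∀ n, Measurable (B n)) :
    Measurable (fun ω (i : ℕ) => (A i ω, B i ω)) :=
  measurable_pi_lambda _ fun i => (hAm i).prodMk (hBm i)

lemma Det.measurableSet (hAm : ∀ n, Measurable (A n)) (hBm : ∀ n, Measurable (B n))
    {m : ℕ} {C : Set Ω} (h : Det A B m C) : MeasurableSet C := by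
  obtain ⟨T, hT, rfl⟩ := h
  exact ((measurable_trunc m).comp (measurable_pairs hAm hBm)) hT

lemma DetIco.measurableSet (hAm : ∀ n, Measurable (A n)) (hBm : ∀ n, Measurable (B n))
    {m L : ℕ} {C : Set Ω} (h : DetIco A B m L C) : MeasurableSet C := by
  obtain ⟨T, hT, rfl⟩ := h
  exact ((measurable_mask m L).comp (measurable_pairs hAm hBm)) hT

lemma Det.mono {m m' : ℕ} {C : Set Ω} (h : Det A B m C) (hm : m ≤ m') : Det A B m' C := by
  obtain ⟨T, hT, rfl⟩ := h
  exact ⟨trunc m ⁻¹' T, (measurable_trunc m) hT, by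
    ext ω; simp [Set.mem_preimage, trunc_trunc hm]⟩

lemma Det.inter {m : ℕ} {C D : Set Ω} (hC : Det A B m C) (hD : Det A B m D) :
    Det A B m (C ∩ D) := by
  obtain ⟨T, hT, rfl⟩ := hC
  obtain ⟨T', hT', rfl⟩ := hD
  exact ⟨T ∩ T', hT.inter hT', rfl⟩

lemma Det.compl {m : ℕ} {C : Set Ω} (hC : Det A B m C) : Det A B m Cᶜ := by
  obtain ⟨T, hT, rfl⟩ := hC
  exact ⟨Tᶜ, hT.compl, rfl⟩

lemma Det.univ (m : ℕ) : Det A B m (Set.univ : Set Ω) :=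
  ⟨Set.univ, MeasurableSet.univ, by simp⟩

lemma DetIco.toDet {m L : ℕ} {C : Set Ω} (h : DetIco A B m L C) : Det A B (m + L) C := by
  obtain ⟨T, hT, rfl⟩ := h
  exact ⟨mask m L ⁻¹' T, (measurable_mask m L) hT, by
    ext ω; simp [Set.mem_preimage, mask_trunc (le_refl (m + L))]⟩

lemma detIco_single {m : ℕ} {s : Set (ℝ × ℝ)} (hs : MeasurableSet s) :
    DetIco A B m 1 {ω | (A m ω, B m ω) ∈ s} := by
  refine ⟨(fun v => v m) ⁻¹' s, (measurable_pi_apply m) hs, ?_⟩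
  ext ω
  simp [Set.mem_preimage, mask, Nat.lt_succ_self]

lemma detIco_det {m n : ℕ} {u t : ℝ} :
    DetIco A B m n {ω | det u (fun i => (A (m + i) ω, B (m + i) ω)) n ≤ t} := by
  refine ⟨(fun v => det u (fun i => v (m + i)) n) ⁻¹' Set.Iic t,
    ((measurable_det u n).comp (measurable_pi_lambda _ fun i => measurable_pi_apply (m + i)))
      measurableSet_Iic, ?_⟩
  ext ω
  simp only [Set.mem_setOf_eq, Set.mem_preimage, Set.mem_Iic]
  constructor <;> intro h <;> refine le_of_eq_of_le (det_congr fun i hi => ?_) h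
  · simp [mask, Nat.le_add_right, Nat.add_lt_add_left hi]
  · simp [mask, Nat.le_add_right, Nat.add_lt_add_left hi]


lemma indep_trunc_mask (hAm : ∀ n, Measurable (A n)) (hBm : ∀ n, Measurable (B n))
    (hindep : iIndepFun (fun n ω => (A n ω, B n ω)) μ) (m L : ℕ) :
    IndepFun (fun ω => trunc m (fun i => (A i ω, B i ω)))
      (fun ω => mask m L (fun i => (A i ω, B i ω))) μ := by
  classical
  have hfm : ∀ n, Measurable (fun ω => (A n ω, B n ω)) := fun n => (hAm n).prodMk (hBm n)
  have hdisj : Disjoint (Finset.range m) (Finset.Ico m (m + L)) := by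
    rw [Finset.disjoint_left]
    intro i hi hi'
    rw [Finset.mem_range] at hi
    rw [Finset.mem_Ico] at hi'
    omega
  have base := hindep.indepFun_finset (Finset.range m) (Finset.Ico m (m + L)) hdisj hfm
  set gS : (↥(Finset.range m) → ℝ × ℝ) → (ℕ → ℝ × ℝ) :=
    fun v j => if h : j ∈ Finset.range m then v ⟨j, h⟩ else 0 with hgSdef
  set gT : (↥(Finset.Ico m (m + L)) → ℝ × ℝ) → (ℕ → ℝ × ℝ) :=
    fun v j => if h : j ∈ Finset.Ico m (m + L) then v ⟨j, h⟩ else 0 with hgTdef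
  have hgS : Measurable gS := by
    apply measurable_pi_lambda
    intro j
    by_cases h : j ∈ Finset.range m
    · simp only [hgSdef, dif_pos h]; exact measurable_pi_apply _
    · simp only [hgSdef, dif_neg h]; exact measurable_const
  have hgT : Measurable gT := by
    apply measurable_pi_lambda
    intro j
    by_cases h : j ∈ Finset.Ico m (m + L)
    · simp only [hgTdef, dif_pos h]; exact measurable_pi_apply _
    · simp only [hgTdef, dif_neg h]; exact measurable_const
  have hcomp := base.comp hgS hgT
  convert hcomp using 1
  · funext ω
    funext j
    by_cases h : j < m
    · simp [Function.comp, hgSdef, trunc, h, Finset.mem_range]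
    · simp [Function.comp, hgSdef, trunc, h, Finset.mem_range]
  · funext ω
    funext j
    by_cases h : m ≤ j ∧ j < m + L
    · simp [Function.comp, hgTdef, mask, h, Finset.mem_Ico]
    · simp [Function.comp, hgTdef, mask, h, Finset.mem_Ico]

lemma det_mul (hAm : ∀ n, Measurable (A n)) (hBm : ∀ n, Measurable (B n))
    (hindep : iIndepFun (fun n ω => (A n ω, B n ω)) μ)
    {m L : ℕ} {C D : Set Ω} (hC : Det A B m C) (hD : DetIco A B m L D) :
    μ (C ∩ D) = μ C * μ D := by
  obtain ⟨T, hT, rfl⟩ := hC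
  obtain ⟨T', hT', rfl⟩ := hD
  exact (indep_trunc_mask hAm hBm hindep m L).measure_inter_preimage_eq_mul T T' hT hT'

lemma indep_det_pair (hAm : ∀ n, Measurable (A n)) (hBm : ∀ n, Measurable (B n))
    (hindep : iIndepFun (fun n ω => (A n ω, B n ω)) μ)
    (m n : ℕ) (u : ℝ) :
    IndepFun (fun ω => det u (fun i => (A (m + i) ω, B (m + i) ω)) n)
      (fun ω => (A (m + n) ω, B (m + n) ω)) μ := by
  have base := indep_trunc_mask hAm hBm hindep (m + n) 1
  have hφ : Measurable (fun v : ℕ → ℝ × ℝ => det u (fun i => v (m + i)) n) :=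
    (measurable_det u n).comp (measurable_pi_lambda _ fun i => measurable_pi_apply (m + i))
  have hψ : Measurable (fun v : ℕ → ℝ × ℝ => v (m + n)) := measurable_pi_apply (m + n)
  have hcomp := base.comp hφ hψ
  convert hcomp using 1
  · funext ω
    exact det_congr fun i hi => by simp [Function.comp, trunc, show m + i < m + n by omega]
  · funext ω
    simp [Function.comp, mask]

lemma det_biInter_single {m : ℕ} {s : ℕ → Set (ℝ × ℝ)} (hs : ∀ i, MeasurableSet (s i)) :
    ∀ t, Det A B (m + t) (⋂ i ∈ Finset.range t, {ω | (A (m + i) ω, B (m + i) ω) ∈ s i})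
  | 0 => by simpa using Det.univ m
  | t + 1 => by
    rw [Finset.range_add_one, Finset.set_biInter_insert]
    exact ((detIco_single (hs t)).toDet.mono (by omega)).inter
      ((det_biInter_single hs t).mono (by omega))

lemma seq_mul (hAm : ∀ n, Measurable (A n)) (hBm : ∀ n, Measurable (B n))
    (hindep : iIndepFun (fun n ω => (A n ω, B n ω)) μ)
    {m : ℕ} {C : Set Ω} (hC : Det A B m C)
    {s : ℕ → Set (ℝ × ℝ)} (hs : ∀ i, MeasurableSet (s i)) :
    ∀ t, μ (C ∩ ⋂ i ∈ Finset.range t, {ω | (A (m + i) ω, B (m + i) ω) ∈ s i})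
      = μ C * ∏ i ∈ Finset.range t, μ {ω | (A (m + i) ω, B (m + i) ω) ∈ s i}
  | 0 => by simp
  | t + 1 => by
    rw [Finset.range_add_one, Finset.set_biInter_insert, Finset.prod_insert (by simp)]
    have hpast : Det A B (m + t)
        (C ∩ ⋂ i ∈ Finset.range t, {ω | (A (m + i) ω, B (m + i) ω) ∈ s i}) :=
      (hC.mono (Nat.le_add_right m t)).inter (det_biInter_single hs t)
    have heq : C ∩ ({ω | (A (m + t) ω, B (m + t) ω) ∈ s t} ∩
        ⋂ i ∈ Finset.range t, {ω | (A (m + i) ω, B (m + i) ω) ∈ s i})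
        = (C ∩ ⋂ i ∈ Finset.range t, {ω | (A (m + i) ω, B (m + i) ω) ∈ s i}) ∩
          {ω | (A (m + t) ω, B (m + t) ω) ∈ s t} := by
      ext ω; simp only [Set.mem_inter_iff]; tauto
    rw [heq, det_mul hAm hBm hindep hpast (detIco_single (hs t)),
      seq_mul hAm hBm hindep hC hs t]
    ring


lemma rpow_subadd {δ : ℝ} (hδ0 : 0 < δ) (hδ1 : δ < 1) (x z : ℝ) :
    |x + z| ^ δ ≤ |x| ^ δ + |z| ^ δ := by
  have h1 : |x + z| ^ δ ≤ (|x| + |z|) ^ δ :=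
    Real.rpow_le_rpow (abs_nonneg _) (abs_add_le x z) hδ0.le
  refine h1.trans ?_
  have h := NNReal.rpow_add_le_add_rpow (Real.toNNReal |x|) (Real.toNNReal |z|) hδ0.le hδ1.le
  have h2 := (NNReal.coe_le_coe).2 h
  rw [NNReal.coe_add, NNReal.coe_rpow, NNReal.coe_rpow, NNReal.coe_rpow, NNReal.coe_add,
    Real.coe_toNNReal _ (abs_nonneg x), Real.coe_toNNReal _ (abs_nonneg z)] at h2
  exact h2

variable [IsProbabilityMeasure μ] {δ : ℝ}

lemma moment_bound
    (hAm : ∀ n, Measurable (A n)) (hBm : ∀ n, Measurable (B n))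
    (hindep : iIndepFun (fun n ω => (A n ω, B n ω)) μ)
    (hident : ∀ n, IdentDistrib (fun ω => (A n ω, B n ω)) (fun ω => (A 0 ω, B 0 ω)) μ μ)
    (hδ0 : 0 < δ) (hδ1 : δ < 1)
    (hAint : Integrable (fun ω => |A 0 ω| ^ δ) μ)
    (hA : ∫ ω, |A 0 ω| ^ δ ∂μ < 1)
    (hB : Integrable (fun ω => |B 0 ω| ^ δ) μ)
    (m : ℕ) (u : ℝ) :
    ∀ n, Integrable (fun ω => |det u (fun i => (A (m + i) ω, B (m + i) ω)) n| ^ δ) μ ∧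
      ∫ ω, |det u (fun i => (A (m + i) ω, B (m + i) ω)) n| ^ δ ∂μ ≤
        (∫ ω, |A 0 ω| ^ δ ∂μ) ^ n * |u| ^ δ +
          (∫ ω, |B 0 ω| ^ δ ∂μ) / (1 - ∫ ω, |A 0 ω| ^ δ ∂μ) := by
  set ρ := ∫ ω, |A 0 ω| ^ δ ∂μ with hρdef
  set βc := ∫ ω, |B 0 ω| ^ δ ∂μ with hβdef
  have hρ0 : 0 ≤ ρ := integral_nonneg fun ω => Real.rpow_nonneg (abs_nonneg _) δ
  have hβ0 : 0 ≤ βc := integral_nonneg fun ω => Real.rpow_nonneg (abs_nonneg _) δ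
  have h1ρ : 0 < 1 - ρ := by linarith
  have hcB0 : 0 ≤ βc / (1 - ρ) := div_nonneg hβ0 h1ρ.le
  have hrpowm : Measurable (fun x : ℝ => x ^ δ) := (Real.continuous_rpow_const hδ0.le).measurable
  have hφA : Measurable (fun q : ℝ × ℝ => |q.1| ^ δ) := hrpowm.comp measurable_fst.abs
  have hφB : Measurable (fun q : ℝ × ℝ => |q.2| ^ δ) := hrpowm.comp measurable_snd.abs
  have hidA : ∀ k, IdentDistrib (fun ω => |A k ω| ^ δ) (fun ω => |A 0 ω| ^ δ) μ μ :=
    fun k => (hident k).comp hφA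
  have hidB : ∀ k, IdentDistrib (fun ω => |B k ω| ^ δ) (fun ω => |B 0 ω| ^ δ) μ μ :=
    fun k => (hident k).comp hφB
  have hAint' : ∀ k, Integrable (fun ω => |A k ω| ^ δ) μ :=
    fun k => (hidA k).integrable_iff.2 hAint
  have hBint' : ∀ k, Integrable (fun ω => |B k ω| ^ δ) μ :=
    fun k => (hidB k).integrable_iff.2 hB
  have hAeq : ∀ k, ∫ ω, |A k ω| ^ δ ∂μ = ρ := fun k => (hidA k).integral_eq
  have hBeq : ∀ k, ∫ ω, |B k ω| ^ δ ∂μ = βc := fun k => (hidB k).integral_eq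
  intro n
  induction n with
  | zero =>
    constructor
    · simpa [det] using integrable_const (|u| ^ δ)
    · simp only [det, pow_zero, one_mul, integral_const, measure_univ, probReal_univ, ENNReal.toReal_one,
        smul_eq_mul]
      linarith
  | succ n ih =>
    obtain ⟨ihint, ihbound⟩ := ih
    set Y := fun ω => det u (fun i => (A (m + i) ω, B (m + i) ω)) n with hYdef
    have hYmeas : Measurable Y :=
      (measurable_det u n).comp
        (measurable_pi_lambda _ fun i => (hAm (m + i)).prodMk (hBm (m + i)))
    have hYd : Measurable fun ω => |Y ω| ^ δ := hrpowm.comp hYmeas.abs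
    have hindYA : IndepFun (fun ω => |A (m + n) ω| ^ δ) (fun ω => |Y ω| ^ δ) μ :=
      (((indep_det_pair hAm hBm hindep m n u).comp (hrpowm.comp measurable_abs) hφA)).symm
    have hmul_int : Integrable (fun ω => |A (m + n) ω| ^ δ * |Y ω| ^ δ) μ :=
      hindYA.integrable_mul (hAint' (m + n)) ihint
    have hptwise : ∀ ω, |det u (fun i => (A (m + i) ω, B (m + i) ω)) (n + 1)| ^ δ ≤
        |A (m + n) ω| ^ δ * |Y ω| ^ δ + |B (m + n) ω| ^ δ := by
      intro ω
      have hd : det u (fun i => (A (m + i) ω, B (m + i) ω)) (n + 1)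
          = A (m + n) ω * Y ω + B (m + n) ω := rfl
      rw [hd]
      refine (rpow_subadd hδ0 hδ1 _ _).trans ?_
      rw [abs_mul, Real.mul_rpow (abs_nonneg _) (abs_nonneg _)]
    have hmeas1 : Measurable fun ω => |det u (fun i => (A (m + i) ω, B (m + i) ω)) (n + 1)| ^ δ :=
      hrpowm.comp ((measurable_det u (n + 1)).comp
        (measurable_pi_lambda _ fun i => (hAm (m + i)).prodMk (hBm (m + i)))).abs
    have hint : Integrable
        (fun ω => |det u (fun i => (A (m + i) ω, B (m + i) ω)) (n + 1)| ^ δ) μ := by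
      refine (hmul_int.add (hBint' (m + n))).mono' hmeas1.aestronglyMeasurable ?_
      filter_upwards with ω
      rw [Real.norm_eq_abs, abs_of_nonneg (Real.rpow_nonneg (abs_nonneg _) δ)]
      exact hptwise ω
    refine ⟨hint, ?_⟩
    have hIle : ∫ ω, |det u (fun i => (A (m + i) ω, B (m + i) ω)) (n + 1)| ^ δ ∂μ ≤
        ∫ ω, (|A (m + n) ω| ^ δ * |Y ω| ^ δ + |B (m + n) ω| ^ δ) ∂μ :=
      integral_mono hint (hmul_int.add (hBint' (m + n))) hptwise
    rw [integral_add hmul_int (hBint' (m + n))] at hIle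
    have hprod : ∫ ω, |A (m + n) ω| ^ δ * |Y ω| ^ δ ∂μ = ρ * ∫ ω, |Y ω| ^ δ ∂μ := by
      have h := hindYA.integral_fun_mul_eq_mul_integral (hAint' (m + n)).1 ihint.1
      simpa [hAeq (m + n)] using h
    rw [hprod, hBeq (m + n)] at hIle
    have hmono : ρ * ∫ ω, |Y ω| ^ δ ∂μ ≤ ρ * (ρ ^ n * |u| ^ δ + βc / (1 - ρ)) :=
      mul_le_mul_of_nonneg_left ihbound hρ0
    have hkey : ρ * (βc / (1 - ρ)) + βc = βc / (1 - ρ) := by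
      field_simp
      ring
    calc ∫ ω, |det u (fun i => (A (m + i) ω, B (m + i) ω)) (n + 1)| ^ δ ∂μ
        ≤ ρ * (ρ ^ n * |u| ^ δ + βc / (1 - ρ)) + βc := by linarith
      _ = ρ ^ (n + 1) * |u| ^ δ + (ρ * (βc / (1 - ρ)) + βc) := by ring
      _ = ρ ^ (n + 1) * |u| ^ δ + βc / (1 - ρ) := by rw [hkey]

lemma markov_bound
    (hAm : ∀ n, Measurable (A n)) (hBm : ∀ n, Measurable (B n))
    (hindep : iIndepFun (fun n ω => (A n ω, B n ω)) μ)
    (hident : ∀ n, IdentDistrib (fun ω => (A n ω, B n ω)) (fun ω => (A 0 ω, B 0 ω)) μ μ)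
    (hδ0 : 0 < δ) (hδ1 : δ < 1)
    (hAint : Integrable (fun ω => |A 0 ω| ^ δ) μ)
    (hA : ∫ ω, |A 0 ω| ^ δ ∂μ < 1)
    (hB : Integrable (fun ω => |B 0 ω| ^ δ) μ)
    (m : ℕ) (u t : ℝ) (ht : 0 < t) (n : ℕ) :
    μ {ω | t < det u (fun i => (A (m + i) ω, B (m + i) ω)) n} ≤
      ENNReal.ofReal (((∫ ω, |A 0 ω| ^ δ ∂μ) ^ n * |u| ^ δ +
        (∫ ω, |B 0 ω| ^ δ ∂μ) / (1 - ∫ ω, |A 0 ω| ^ δ ∂μ)) / t ^ δ) := by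
  obtain ⟨hint, hbound⟩ :=
    moment_bound hAm hBm hindep hident hδ0 hδ1 hAint hA hB m u n
  set Y := fun ω => det u (fun i => (A (m + i) ω, B (m + i) ω)) n with hYdef
  have hsub : {ω | t < Y ω} ⊆ {ω | t ^ δ ≤ |Y ω| ^ δ} := by
    intro ω hω
    exact Real.rpow_le_rpow ht.le ((le_abs_self _).trans' (le_of_lt hω)) hδ0.le
  have hmarkov := mul_meas_ge_le_integral_of_nonneg
    (ae_of_all μ fun ω => Real.rpow_nonneg (abs_nonneg _) δ) hint (t ^ δ)
  have htδ : 0 < t ^ δ := Real.rpow_pos_of_pos ht δ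
  have h1 : (μ {ω | t ^ δ ≤ |Y ω| ^ δ}).toReal ≤
      ((∫ ω, |A 0 ω| ^ δ ∂μ) ^ n * |u| ^ δ +
        (∫ ω, |B 0 ω| ^ δ ∂μ) / (1 - ∫ ω, |A 0 ω| ^ δ ∂μ)) / t ^ δ := by
    rw [le_div_iff₀ htδ]
    calc (μ {ω | t ^ δ ≤ |Y ω| ^ δ}).toReal * t ^ δ
        = t ^ δ * (μ {ω | t ^ δ ≤ |Y ω| ^ δ}).toReal := mul_comm _ _
      _ ≤ ∫ ω, |Y ω| ^ δ ∂μ := hmarkov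
      _ ≤ _ := hbound
  calc μ {ω | t < Y ω} ≤ μ {ω | t ^ δ ≤ |Y ω| ^ δ} := measure_mono hsub
    _ = ENNReal.ofReal ((μ {ω | t ^ δ ≤ |Y ω| ^ δ}).toReal) :=
        (ENNReal.ofReal_toReal (measure_ne_top μ _)).symm
    _ ≤ _ := ENNReal.ofReal_le_ofReal h1


lemma compare_core {M : ℝ} (x : ℕ → ℝ) (v : ℕ → ℝ × ℝ)
    (hrec : ∀ i, x (i + 1) = (v i).1 * x i + (v i).2)
    (hpos : ∀ i, 0 < (v i).1) (h0 : x 0 ≤ M) :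
    ∀ n, x n ≤ det M v n
  | 0 => h0
  | n + 1 => by
    rw [hrec n]
    simp only [det]
    have ih := compare_core x v hrec hpos h0 n
    nlinarith [hpos n]

lemma scenario_core {a b c M₀ : ℝ} (ha2 : 1 / 2 ≤ a) (ha1 : a < 1)
    (hc : c = 1 + max b 0 / (1 - a)) {L₀ : ℕ} (hL₀ : a ^ L₀ * M₀ < 1)
    (x α β : ℕ → ℝ)
    (hx0 : x 0 ≤ M₀)
    (hrec : ∀ i, x (i + 1) = α i * x i + β i)
    (hnn : ∀ i, i ≤ L₀ → 0 ≤ x i)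
    (hsab : ∀ i, i < L₀ → α i ≤ a ∧ β i ≤ b ∧ 0 < α i)
    (hlast : β L₀ / α L₀ < -c ∧ 0 < α L₀) :
    x (L₀ + 1) < 0 := by
  have h1a : 0 < 1 - a := by linarith
  have hmb : 0 ≤ max b 0 / (1 - a) := div_nonneg (le_max_right b 0) h1a.le
  have h3 : max b 0 / (1 - a) * (1 - a) = max b 0 := div_mul_cancel₀ _ (ne_of_gt h1a)
  have hbb : b ≤ max b 0 := le_max_left b 0
  have key : ∀ i, i ≤ L₀ → x i ≤ a ^ i * M₀ + max b 0 / (1 - a) := by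
    intro i
    induction i with
    | zero =>
      intro _
      simp only [pow_zero, one_mul]
      linarith
    | succ i ih =>
      intro hi1
      have hi : i < L₀ := by omega
      obtain ⟨hα, hβ, hαpos⟩ := hsab i hi
      have hxi := ih (by omega)
      have hxnn := hnn i (by omega)
      rw [hrec i]
      have h1 : α i * x i ≤ a * x i := mul_le_mul_of_nonneg_right hα hxnn
      have h2 : a * x i ≤ a * (a ^ i * M₀ + max b 0 / (1 - a)) :=
        mul_le_mul_of_nonneg_left hxi (by linarith)
      rw [pow_succ]
      nlinarith
  have hxL := key L₀ le_rfl
  have hxc : x L₀ < 1 + max b 0 / (1 - a) := by linarith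
  obtain ⟨hq, hαpos⟩ := hlast
  have hαne : α L₀ ≠ 0 := ne_of_gt hαpos
  have hXeq : x (L₀ + 1) = α L₀ * (x L₀ + β L₀ / α L₀) := by
    rw [hrec]
    field_simp
  rw [hXeq]
  apply mul_neg_of_pos_of_neg hαpos
  have : β L₀ / α L₀ < -(1 + max b 0 / (1 - a)) := by rw [hc] at hq; exact hq
  linarith

end ARAux

open ARAux

/-- If `(A n, B n)` is i.i.d. with `E[|A|^δ] < 1`, `E[|B|^δ] < ∞` for some `δ ∈ (0,1)`,
`X (n+1) u = A n * X n u + B n`, `X 0 u = u`, with `A > 0` almost surely and `B/A` unbounded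
from below, then for every initial value `u`, almost surely there exists `n ≥ 1` with
`X n u < 0`. -/
theorem autoregressive_hits_negative_of_unbounded_below
    {Ω : Type*} [MeasurableSpace Ω] (μ : Measure Ω) [IsProbabilityMeasure μ]
    (A B : ℕ → Ω → ℝ) (hAmeas : ∀ n, Measurable (A n)) (hBmeas : ∀ n, Measurable (B n))
    (hindep : iIndepFun (fun n ω => (A n ω, B n ω)) μ)
    (hident : ∀ n, IdentDistrib (fun ω => (A n ω, B n ω)) (fun ω => (A 0 ω, B 0 ω)) μ μ)
    (δ : ℝ) (hδ0 : 0 < δ) (hδ1 : δ < 1)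
    (hAint : Integrable (fun ω => |A 0 ω| ^ δ) μ)
    (hA : ∫ ω, |A 0 ω| ^ δ ∂μ < 1)
    (hB : Integrable (fun ω => |B 0 ω| ^ δ) μ)
    (X : ℕ → ℝ → Ω → ℝ)
    (hX0 : ∀ u ω, X 0 u ω = u)
    (hXrec : ∀ n u ω, X (n + 1) u ω = A n ω * X n u ω + B n ω)
    (hApos : ∀ᵐ ω ∂μ, 0 < A 0 ω)
    (hBA : ∀ c : ℝ, 0 < c → 0 < μ {ω | B 0 ω / A 0 ω < -c}) :
    ∀ u : ℝ, ∀ᵐ ω ∂μ, ∃ n : ℕ, 0 < n ∧ X n u ω < 0 := by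
  classical
  -- basic constants
  have hρ0 : 0 ≤ ∫ ω, |A 0 ω| ^ δ ∂μ :=
    integral_nonneg fun ω => Real.rpow_nonneg (abs_nonneg _) δ
  set ρ := ∫ ω, |A 0 ω| ^ δ ∂μ with hρdef
  have hβ0 : 0 ≤ ∫ ω, |B 0 ω| ^ δ ∂μ :=
    integral_nonneg fun ω => Real.rpow_nonneg (abs_nonneg _) δ
  set βc := ∫ ω, |B 0 ω| ^ δ ∂μ with hβdef
  have h1ρ : 0 < 1 - ρ := by linarith
  set cB := βc / (1 - ρ) with hcBdef
  have hcB0 : 0 ≤ cB := div_nonneg hβ0 h1ρ.le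
  -- X in terms of det
  have hXdet : ∀ (v : ℝ) (n : ℕ) (ω : Ω), X n v ω = det v (fun i => (A i ω, B i ω)) n := by
    intro v n ω
    induction n with
    | zero => simp [hX0, det]
    | succ n ih =>
      rw [hXrec]
      simp only [det]
      rw [ih]
  -- all slopes are a.s. positive
  have hApos' : ∀ᵐ ω ∂μ, ∀ i, 0 < A i ω := by
    rw [ae_all_iff]
    intro i
    have hid : IdentDistrib (A i) (A 0) μ μ := (hident i).comp measurable_fst
    have heq : μ ((A i) ⁻¹' Set.Iic 0) = μ ((A 0) ⁻¹' Set.Iic 0) :=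
      hid.measure_mem_eq measurableSet_Iic
    rw [ae_iff] at hApos ⊢
    simp only [not_lt] at hApos ⊢
    calc μ {ω | A i ω ≤ 0} = μ {ω | A 0 ω ≤ 0} := heq
      _ = 0 := hApos
  -- identical distribution of pair events
  have hid_pair : ∀ (k : ℕ) (s : Set (ℝ × ℝ)), MeasurableSet s →
      μ {ω | (A k ω, B k ω) ∈ s} = μ {ω | (A 0 ω, B 0 ω) ∈ s} :=
    fun k s hs => (hident k).measure_mem_eq hs
  -- positive probability of small slope
  have hA01 : 0 < μ {ω | 0 < A 0 ω ∧ A 0 ω < 1} := by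
    rcases eq_or_ne (μ {ω | 0 < A 0 ω ∧ A 0 ω < 1}) 0 with h0 | h0
    · exfalso
      have h1 : ∀ᵐ ω ∂μ, ¬(0 < A 0 ω ∧ A 0 ω < 1) := by
        rw [ae_iff]
        simpa using h0
      have hae : ∀ᵐ ω ∂μ, 1 ≤ |A 0 ω| ^ δ := by
        filter_upwards [h1, hApos] with ω hω h2
        have h3 : 1 ≤ A 0 ω := by
          by_contra hcon
          exact hω ⟨h2, by linarith⟩
        rw [abs_of_pos h2]
        exact Real.one_le_rpow h3 hδ0.le
      have hge : (1 : ℝ) ≤ ρ := by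
        have h4 := integral_mono_ae (integrable_const (1 : ℝ)) hAint hae
        rw [integral_const] at h4
        simp only [measure_univ, probReal_univ, ENNReal.toReal_one, smul_eq_mul, mul_one] at h4
        rw [← hρdef] at h4
        exact h4
      linarith
    · exact pos_iff_ne_zero.2 h0
  -- choose a
  obtain ⟨aa, ha2, ha1, haa⟩ : ∃ aa : ℝ, 1 / 2 ≤ aa ∧ aa < 1 ∧
      0 < μ {ω | 0 < A 0 ω ∧ A 0 ω ≤ aa} := by
    have hsub : {ω | 0 < A 0 ω ∧ A 0 ω < 1} ⊆
        ⋃ m : ℕ, {ω | 0 < A 0 ω ∧ A 0 ω ≤ 1 - 1 / ((m : ℝ) + 2)} := by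
      intro ω hω
      obtain ⟨m, hm⟩ := exists_nat_one_div_lt (show (0 : ℝ) < 1 - A 0 ω by linarith [hω.2])
      refine Set.mem_iUnion.2 ⟨m, hω.1, ?_⟩
      have hle : 1 / ((m : ℝ) + 2) ≤ 1 / ((m : ℝ) + 1) := by
        apply one_div_le_one_div_of_le
        · positivity
        · linarith
      linarith
    have hex : ∃ m : ℕ, μ {ω | 0 < A 0 ω ∧ A 0 ω ≤ 1 - 1 / ((m : ℝ) + 2)} ≠ 0 := by
      by_contra hcon
      push_neg at hcon
      have h0 : μ (⋃ m : ℕ, {ω | 0 < A 0 ω ∧ A 0 ω ≤ 1 - 1 / ((m : ℝ) + 2)}) = 0 :=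
        measure_iUnion_null hcon
      exact hA01.ne' (le_antisymm ((measure_mono hsub).trans h0.le) zero_le)
    obtain ⟨m, hm⟩ := hex
    refine ⟨1 - 1 / ((m : ℝ) + 2), ?_, ?_, pos_iff_ne_zero.2 hm⟩
    · have h2 : 1 / ((m : ℝ) + 2) ≤ 1 / 2 := by
        apply one_div_le_one_div_of_le
        · norm_num
        · push_cast; linarith [Nat.cast_nonneg (α := ℝ) m]
      linarith
    · have h2 : 0 < 1 / ((m : ℝ) + 2) := by positivity
      linarith
  -- choose b
  obtain ⟨bb, hrpos⟩ : ∃ bb : ℝ,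
      0 < μ {ω | (A 0 ω, B 0 ω) ∈ {q : ℝ × ℝ | q.1 ≤ aa ∧ q.2 ≤ bb ∧ 0 < q.1}} := by
    have hsub : {ω | 0 < A 0 ω ∧ A 0 ω ≤ aa} ⊆
        ⋃ m : ℕ, {ω | (A 0 ω, B 0 ω) ∈
          {q : ℝ × ℝ | q.1 ≤ aa ∧ q.2 ≤ (m : ℝ) ∧ 0 < q.1}} := by
      intro ω hω
      obtain ⟨m, hm⟩ := exists_nat_ge (B 0 ω)
      exact Set.mem_iUnion.2 ⟨m, hω.2, hm, hω.1⟩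
    by_contra hcon
    push_neg at hcon
    have h0 : μ (⋃ m : ℕ, {ω | (A 0 ω, B 0 ω) ∈
        {q : ℝ × ℝ | q.1 ≤ aa ∧ q.2 ≤ (m : ℝ) ∧ 0 < q.1}}) = 0 :=
      measure_iUnion_null fun m => le_antisymm (hcon m) zero_le
    exact haa.ne' (le_antisymm ((measure_mono hsub).trans h0.le) zero_le)
  set sabset : Set (ℝ × ℝ) := {q : ℝ × ℝ | q.1 ≤ aa ∧ q.2 ≤ bb ∧ 0 < q.1} with hsabdef
  have hsab_meas : MeasurableSet sabset :=
    (measurableSet_le measurable_fst measurable_const).inter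
      ((measurableSet_le measurable_snd measurable_const).inter
        (measurableSet_lt measurable_const measurable_fst))
  -- the constant c and the event for the last jump
  set c : ℝ := 1 + max bb 0 / (1 - aa) with hcdef
  have h1aa : 0 < 1 - aa := by linarith
  have hc0 : 0 < c := by
    have : 0 ≤ max bb 0 / (1 - aa) := div_nonneg (le_max_right bb 0) h1aa.le
    rw [hcdef]; linarith
  set spcset : Set (ℝ × ℝ) := {q : ℝ × ℝ | q.2 / q.1 < -c ∧ 0 < q.1} with hspcdef
  have hspc_meas : MeasurableSet spcset :=
    (measurableSet_lt (measurable_snd.div measurable_fst) measurable_const).inter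
      (measurableSet_lt measurable_const measurable_fst)
  have hppos : 0 < μ {ω | (A 0 ω, B 0 ω) ∈ spcset} := by
    have h1 := hBA c hc0
    have hae : {ω | B 0 ω / A 0 ω < -c} =ᵐ[μ] {ω | (A 0 ω, B 0 ω) ∈ spcset} := by
      filter_upwards [hApos] with ω h
      show (B 0 ω / A 0 ω < -c) = (B 0 ω / A 0 ω < -c ∧ 0 < A 0 ω)
      exact eq_iff_iff.2 ⟨fun hlt => ⟨hlt, h⟩, fun hq => hq.1⟩
    rw [← measure_congr hae]
    exact h1
  -- upper cut-off M₀ and length L₀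
  set M₀ : ℝ := (2 * (1 + cB)) ^ (δ⁻¹) with hM₀def
  have hM₀pos : 0 < M₀ := Real.rpow_pos_of_pos (by linarith) _
  have hM₀δ : M₀ ^ δ = 2 * (1 + cB) := by
    rw [hM₀def, ← Real.rpow_mul (by linarith), inv_mul_cancel₀ hδ0.ne', Real.rpow_one]
  obtain ⟨L₀, hL₀⟩ : ∃ L₀ : ℕ, aa ^ L₀ * M₀ < 1 := by
    obtain ⟨L₀, h⟩ := exists_pow_lt_of_lt_one (show (0 : ℝ) < 1 / M₀ by positivity) ha1
    exact ⟨L₀, (lt_div_iff₀ hM₀pos).1 h⟩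
  -- the γ constant
  set r' := μ {ω | (A 0 ω, B 0 ω) ∈ sabset} with hr'def
  set p' := μ {ω | (A 0 ω, B 0 ω) ∈ spcset} with hp'def
  set γ : ℝ≥0∞ := ENNReal.ofReal (1 / 2) * r' ^ L₀ * p' with hγdef
  have hγ0 : γ ≠ 0 := by
    refine mul_ne_zero (mul_ne_zero ?_ ?_) ?_
    · exact (ENNReal.ofReal_pos.2 (by norm_num)).ne'
    · exact pow_ne_zero _ hrpos.ne'
    · exact hppos.ne'
  have hγ1 : γ ≤ 1 := by
    refine mul_le_one' (mul_le_one' ?_ ?_) ?_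
    · exact ENNReal.ofReal_le_one.2 (by norm_num)
    · exact pow_le_one' prob_le_one L₀
    · exact prob_le_one
  have h1γlt : (1 : ℝ≥0∞) - γ < 1 := ENNReal.sub_lt_self ENNReal.one_ne_top one_ne_zero hγ0
  -- fix the initial value
  intro u
  rw [ae_iff]
  have hEeq : {ω | ¬∃ n, 0 < n ∧ X n u ω < 0} = {ω | ∀ n, 0 < n → 0 ≤ X n u ω} := by
    ext ω
    constructor
    · intro h n hn
      by_contra hcon
      exact h ⟨n, hn, by linarith⟩
    · rintro h ⟨n, hn, hlt⟩
      exact absurd (h n hn) (not_le.2 hlt)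
  rw [hEeq]
  set E := {ω : Ω | ∀ n, 0 < n → 0 ≤ X n u ω} with hEsetdef
  -- the main quantitative estimate
  have main : ∀ (k : ℕ) (M : ℝ), 1 ≤ M →
      μ E ≤ (k : ℝ≥0∞) * ENNReal.ofReal ((|u| ^ δ + cB) / M ^ δ) + (1 - γ) ^ k := by
    intro k M hM
    have hMpos : 0 < M := lt_of_lt_of_le one_pos hM
    have hMδpos : 0 < M ^ δ := Real.rpow_pos_of_pos hMpos δ
    obtain ⟨n₀, hn₀⟩ : ∃ n₀ : ℕ, ρ ^ n₀ * M ^ δ ≤ 1 := by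
      obtain ⟨n₀, h⟩ := exists_pow_lt_of_lt_one (show (0 : ℝ) < 1 / M ^ δ by positivity) hA
      exact ⟨n₀, ((lt_div_iff₀ hMδpos).1 h).le⟩
    set L := n₀ + L₀ + 1 with hLdef
    have hL1 : 1 ≤ L := by omega
    -- the events
    set sfun : ℕ → Set (ℝ × ℝ) := fun i => if i < L₀ then sabset else spcset with hsfundef
    have hsfun_meas : ∀ i, MeasurableSet (sfun i) := by
      intro i
      simp only [hsfundef]
      by_cases h : i < L₀
      · simp only [if_pos h]; exact hsab_meas
      · simp only [if_neg h]; exact hspc_meas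
    set D : ℕ → Set Ω := fun j =>
      {ω | det M (fun i => (A ((j + 1) * L + i) ω, B ((j + 1) * L + i) ω)) n₀ ≤ M₀} with hDdef
    set G : ℕ → Set Ω := fun j =>
      ⋂ i ∈ Finset.range (L₀ + 1),
        {ω | (A ((j + 1) * L + n₀ + i) ω, B ((j + 1) * L + n₀ + i) ω) ∈ sfun i} with hGdef
    set F : ℕ → Set Ω := fun j => D j ∩ G j with hFdef
    set Cs : ℕ → Set Ω := fun t => ⋂ j ∈ Finset.range t, (F j)ᶜ with hCsdef
    -- Det structure
    have hD_detIco : ∀ j, DetIco A B ((j + 1) * L) n₀ (D j) := fun j => detIco_det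
    have hF_det : ∀ j, Det A B ((j + 2) * L) (F j) := by
      intro j
      have harith : (j + 1) * L + n₀ + (L₀ + 1) = (j + 2) * L := by rw [hLdef]; ring
      have hDd : Det A B ((j + 2) * L) (D j) := by
        refine (hD_detIco j).toDet.mono ?_
        calc (j + 1) * L + n₀ ≤ (j + 1) * L + n₀ + (L₀ + 1) := by omega
          _ = (j + 2) * L := harith
      have hGd : Det A B ((j + 2) * L) (G j) := by
        have := det_biInter_single (A := A) (B := B) (m := (j + 1) * L + n₀) hsfun_meas (L₀ + 1)
        rw [harith] at this
        exact this
      exact hDd.inter hGd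
    have hCs_det : ∀ t, Det A B ((t + 1) * L) (Cs t) := by
      intro t
      induction t with
      | zero =>
        have h0 : Cs 0 = Set.univ := by simp [hCsdef]
        rw [h0]
        exact Det.univ _
      | succ t ih =>
        have hsplit : Cs (t + 1) = Cs t ∩ (F t)ᶜ := by
          simp only [hCsdef]
          rw [Finset.range_add_one, Finset.set_biInter_insert]
          exact Set.inter_comm _ _
        rw [hsplit]
        exact (ih.mono (Nat.mul_le_mul_right L (by omega))).inter
          ((hF_det t).compl.mono (Nat.mul_le_mul_right L (by omega)))
    -- Markov bound for the block starting points
    have hXbound : ∀ j : ℕ, μ {ω | M < X ((j + 1) * L) u ω} ≤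
        ENNReal.ofReal ((|u| ^ δ + cB) / M ^ δ) := by
      intro j
      have hseteq : {ω | M < X ((j + 1) * L) u ω} =
          {ω | M < det u (fun i => (A (0 + i) ω, B (0 + i) ω)) ((j + 1) * L)} := by
        ext ω
        rw [Set.mem_setOf_eq, Set.mem_setOf_eq, hXdet]
        have hfun : (fun i => (A (0 + i) ω, B (0 + i) ω)) = fun i => (A i ω, B i ω) := by
          funext i
          rw [Nat.zero_add]
        rw [hfun]
      rw [hseteq]
      refine (markov_bound hAmeas hBmeas hindep hident hδ0 hδ1 hAint hA hB 0 u M hMpos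
        ((j + 1) * L)).trans (ENNReal.ofReal_le_ofReal ?_)
      rw [← hρdef, ← hβdef, ← hcBdef, div_le_div_iff_of_pos_right hMδpos]
      have hpow : ρ ^ ((j + 1) * L) ≤ 1 := pow_le_one₀ hρ0 hA.le
      nlinarith [Real.rpow_nonneg (abs_nonneg u) δ]
    -- probability of D j is at least 1/2
    have hD_meas : ∀ j, MeasurableSet (D j) :=
      fun j => (hD_detIco j).measurableSet hAmeas hBmeas
    have hD_prob : ∀ j, ENNReal.ofReal (1 / 2) ≤ μ (D j) := by
      intro j
      have hcompl : μ (D j)ᶜ ≤ ENNReal.ofReal (1 / 2) := by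
        have hce : (D j)ᶜ = {ω | M₀ <
            det M (fun i => (A ((j + 1) * L + i) ω, B ((j + 1) * L + i) ω)) n₀} := by
          simp only [hDdef]
          ext ω
          simp [not_le]
        rw [hce]
        refine (markov_bound hAmeas hBmeas hindep hident hδ0 hδ1 hAint hA hB ((j + 1) * L) M M₀
          hM₀pos n₀).trans (ENNReal.ofReal_le_ofReal ?_)
        rw [← hρdef, ← hβdef, ← hcBdef, hM₀δ, abs_of_pos hMpos, div_le_iff₀ (by linarith)]
        have hρn : 0 ≤ ρ ^ n₀ * M ^ δ := by positivity
        linarith [hn₀]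
      have hsum : μ (D j) + μ (D j)ᶜ = 1 :=
        (measure_add_measure_compl (hD_meas j)).trans measure_univ
      have hhalf : ENNReal.ofReal (1 / 2) + ENNReal.ofReal (1 / 2) = 1 := by
        rw [← ENNReal.ofReal_add (by norm_num) (by norm_num)]
        norm_num
      have h2 : ENNReal.ofReal (1 / 2) + ENNReal.ofReal (1 / 2) ≤ μ (D j) + ENNReal.ofReal (1 / 2) := by
        rw [hhalf, ← hsum]
        exact add_le_add le_rfl hcompl
      exact (ENNReal.add_le_add_iff_right ENNReal.ofReal_ne_top).1 h2
    -- the contraction step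
    have hCF : ∀ t, μ (Cs (t + 1)) ≤ (1 - γ) * μ (Cs t) := by
      intro t
      have hsplit : Cs (t + 1) = Cs t ∩ (F t)ᶜ := by
        simp only [hCsdef]
        rw [Finset.range_add_one, Finset.set_biInter_insert]
        exact Set.inter_comm _ _
      have hF_meas : MeasurableSet (F t) := (hF_det t).measurableSet hAmeas hBmeas
      have hCs_meas : MeasurableSet (Cs t) := (hCs_det t).measurableSet hAmeas hBmeas
      have hpast : Det A B ((t + 1) * L + n₀) (Cs t ∩ D t) :=
        ((hCs_det t).mono (Nat.le_add_right _ _)).inter (hD_detIco t).toDet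
      have hG1 : μ ((Cs t ∩ D t) ∩ G t) = μ (Cs t ∩ D t) *
          ∏ i ∈ Finset.range (L₀ + 1),
            μ {ω | (A ((t + 1) * L + n₀ + i) ω, B ((t + 1) * L + n₀ + i) ω) ∈ sfun i} := by
        simp only [hGdef]
        exact seq_mul hAmeas hBmeas hindep hpast hsfun_meas (L₀ + 1)
      have h2 : μ (Cs t ∩ D t) = μ (Cs t) * μ (D t) :=
        det_mul hAmeas hBmeas hindep (hCs_det t) (hD_detIco t)
      have h3 : ∏ i ∈ Finset.range (L₀ + 1),
          μ {ω | (A ((t + 1) * L + n₀ + i) ω, B ((t + 1) * L + n₀ + i) ω) ∈ sfun i}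
          = r' ^ L₀ * p' := by
        rw [Finset.prod_range_succ]
        have hfirst : ∀ i ∈ Finset.range L₀,
            μ {ω | (A ((t + 1) * L + n₀ + i) ω, B ((t + 1) * L + n₀ + i) ω) ∈ sfun i} = r' := by
          intro i hi
          rw [Finset.mem_range] at hi
          simp only [hsfundef, if_pos hi]
          exact hid_pair _ sabset hsab_meas
        rw [Finset.prod_congr rfl hfirst, Finset.prod_const, Finset.card_range]
        have hlast : μ {ω | (A ((t + 1) * L + n₀ + L₀) ω, B ((t + 1) * L + n₀ + L₀) ω) ∈ sfun L₀}
            = p' := by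
          simp only [hsfundef, if_neg (lt_irrefl L₀)]
          exact hid_pair _ spcset hspc_meas
        rw [hlast]
      have hμCF : μ (Cs t) * γ ≤ μ (Cs t ∩ F t) := by
        have hassoc : Cs t ∩ F t = (Cs t ∩ D t) ∩ G t := by
          simp only [hFdef]
          rw [Set.inter_assoc]
        rw [hassoc, hG1, h2, h3]
        calc μ (Cs t) * γ = μ (Cs t) * ENNReal.ofReal (1 / 2) * (r' ^ L₀ * p') := by
              rw [hγdef]; ring
          _ ≤ μ (Cs t) * μ (D t) * (r' ^ L₀ * p') :=
              mul_le_mul' (mul_le_mul' le_rfl (hD_prob t)) le_rfl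
      have hdiff : μ (Cs (t + 1)) = μ (Cs t) - μ (Cs t ∩ F t) := by
        rw [hsplit]
        have heq2 : Cs t ∩ (F t)ᶜ = Cs t \ (Cs t ∩ F t) := by
          ext ω
          simp only [Set.mem_inter_iff, Set.mem_diff, Set.mem_compl_iff]
          tauto
        rw [heq2, measure_diff Set.inter_subset_left
          ((hCs_meas.inter hF_meas).nullMeasurableSet) (measure_ne_top μ _)]
      rw [hdiff]
      calc μ (Cs t) - μ (Cs t ∩ F t) ≤ μ (Cs t) - μ (Cs t) * γ := tsub_le_tsub_left hμCF _
        _ ≤ (1 - γ) * μ (Cs t) := by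
            rw [tsub_le_iff_right, mul_comm (μ (Cs t)) γ, ← add_mul,
              tsub_add_cancel_of_le hγ1, one_mul]
    have hCsk : ∀ t, μ (Cs t) ≤ (1 - γ) ^ t := by
      intro t
      induction t with
      | zero => simp [hCsdef]
      | succ t ih =>
        calc μ (Cs (t + 1)) ≤ (1 - γ) * μ (Cs t) := hCF t
          _ ≤ (1 - γ) * (1 - γ) ^ t := mul_le_mul' le_rfl ih
          _ = (1 - γ) ^ (t + 1) := (pow_succ' _ _).symm
    -- the pathwise inclusion
    have hincl : E ∩ {ω | ∀ i, 0 < A i ω} ⊆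
        (⋃ j ∈ Finset.range k, {ω | M < X ((j + 1) * L) u ω}) ∪ Cs k := by
      rintro ω ⟨hE1, hpos⟩
      rw [Set.mem_setOf_eq] at hpos
      by_cases hcase : ∃ j ∈ Finset.range k, M < X ((j + 1) * L) u ω
      · obtain ⟨j, hj, hXj⟩ := hcase
        exact Or.inl (Set.mem_biUnion hj hXj)
      · push_neg at hcase
        refine Or.inr ?_
        simp only [hCsdef]
        refine Set.mem_iInter₂.2 fun j hj => ?_
        intro hFj
        simp only [hFdef, Set.mem_inter_iff] at hFj
        obtain ⟨hDj, hGj⟩ := hFj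
        simp only [hDdef, Set.mem_setOf_eq] at hDj
        have hEω : ∀ n, 0 < n → 0 ≤ X n u ω := hE1
        have hL1' : 1 ≤ (j + 1) * L := le_trans hL1 (Nat.le_mul_of_pos_left L (Nat.succ_pos j))
        have hidxpos : ∀ i : ℕ, 0 < (j + 1) * L + n₀ + i := fun i =>
          Nat.lt_of_lt_of_le Nat.zero_lt_one
            (le_trans hL1' (le_trans (Nat.le_add_right _ n₀) (Nat.le_add_right _ i)))
        have hcomp : ∀ n, X ((j + 1) * L + n) u ω ≤
            det M (fun i => (A ((j + 1) * L + i) ω, B ((j + 1) * L + i) ω)) n :=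
          compare_core (fun n => X ((j + 1) * L + n) u ω) _
            (fun i => hXrec ((j + 1) * L + i) u ω) (fun i => hpos _) (hcase j hj)
        have hXn₀ : X ((j + 1) * L + n₀) u ω ≤ M₀ := (hcomp n₀).trans hDj
        have hsing : ∀ i ∈ Finset.range (L₀ + 1),
            (A ((j + 1) * L + n₀ + i) ω, B ((j + 1) * L + n₀ + i) ω) ∈ sfun i := by
          intro i hi
          exact Set.mem_iInter₂.1 hGj i hi
        have hfin : X ((j + 1) * L + n₀ + (L₀ + 1)) u ω < 0 := by
          refine scenario_core ha2 ha1 hcdef hL₀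
            (fun i => X ((j + 1) * L + n₀ + i) u ω)
            (fun i => A ((j + 1) * L + n₀ + i) ω)
            (fun i => B ((j + 1) * L + n₀ + i) ω)
            hXn₀ (fun i => hXrec ((j + 1) * L + n₀ + i) u ω) ?_ ?_ ?_
          · intro i _
            exact hEω _ (hidxpos i)
          · intro i hi
            have h := hsing i (Finset.mem_range.2 (by omega))
            simp only [hsfundef, if_pos hi] at h
            exact h
          · have h := hsing L₀ (Finset.mem_range.2 (by omega))
            simp only [hsfundef, if_neg (lt_irrefl L₀)] at h
            exact h
        exact absurd (hEω _ (hidxpos (L₀ + 1))) (not_le.2 hfin)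
    -- assembling
    have hAc0 : μ ({ω | ∀ i, 0 < A i ω}ᶜ) = 0 := by
      have h := hApos'
      rw [ae_iff] at h
      rw [Set.compl_setOf]
      exact h
    have hEsub : E ⊆ ((⋃ j ∈ Finset.range k, {ω | M < X ((j + 1) * L) u ω}) ∪ Cs k) ∪
        {ω | ∀ i, 0 < A i ω}ᶜ := by
      intro ω hω
      by_cases hp2 : ∀ i, 0 < A i ω
      · exact Or.inl (hincl ⟨hω, hp2⟩)
      · exact Or.inr hp2
    calc μ E ≤ μ (((⋃ j ∈ Finset.range k, {ω | M < X ((j + 1) * L) u ω}) ∪ Cs k) ∪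
          {ω | ∀ i, 0 < A i ω}ᶜ) := measure_mono hEsub
      _ ≤ μ ((⋃ j ∈ Finset.range k, {ω | M < X ((j + 1) * L) u ω}) ∪ Cs k) +
          μ ({ω | ∀ i, 0 < A i ω}ᶜ) := measure_union_le _ _
      _ = μ ((⋃ j ∈ Finset.range k, {ω | M < X ((j + 1) * L) u ω}) ∪ Cs k) := by
          rw [hAc0, add_zero]
      _ ≤ μ (⋃ j ∈ Finset.range k, {ω | M < X ((j + 1) * L) u ω}) + μ (Cs k) :=
          measure_union_le _ _
      _ ≤ (∑ j ∈ Finset.range k, μ {ω | M < X ((j + 1) * L) u ω}) + (1 - γ) ^ k :=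
          add_le_add (measure_biUnion_finset_le _ _) (hCsk k)
      _ ≤ (∑ _j ∈ Finset.range k, ENNReal.ofReal ((|u| ^ δ + cB) / M ^ δ)) + (1 - γ) ^ k :=
          add_le_add (Finset.sum_le_sum fun j _ => hXbound j) le_rfl
      _ = (k : ℝ≥0∞) * ENNReal.ofReal ((|u| ^ δ + cB) / M ^ δ) + (1 - γ) ^ k := by
          rw [Finset.sum_const, Finset.card_range, nsmul_eq_mul]
  -- pass to the limit in M
  have hlim1 : ∀ k : ℕ, μ E ≤ (1 - γ) ^ k := by
    intro k
    have h1 : Tendsto (fun n : ℕ => (|u| ^ δ + cB) / ((n : ℝ) + 1) ^ δ) atTop (𝓝 0) := by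
      apply Tendsto.div_atTop tendsto_const_nhds
      exact (tendsto_rpow_atTop hδ0).comp
        (tendsto_atTop_add_const_right atTop 1 tendsto_natCast_atTop_atTop)
    have h2 : Tendsto (fun n : ℕ => (k : ℝ≥0∞) *
        ENNReal.ofReal ((|u| ^ δ + cB) / ((n : ℝ) + 1) ^ δ) + (1 - γ) ^ k) atTop
        (𝓝 ((k : ℝ≥0∞) * 0 + (1 - γ) ^ k)) := by
      refine Tendsto.add ?_ tendsto_const_nhds
      have h3 := ENNReal.tendsto_ofReal h1
      rw [ENNReal.ofReal_zero] at h3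
      exact ENNReal.Tendsto.const_mul h3 (Or.inr (ENNReal.natCast_ne_top k))
    rw [mul_zero, zero_add] at h2
    refine ge_of_tendsto' h2 fun n => main k ((n : ℝ) + 1) ?_
    linarith [Nat.cast_nonneg (α := ℝ) n]
  -- pass to the limit in k
  have hlim2 : μ E ≤ 0 :=
    ge_of_tendsto' (ENNReal.tendsto_pow_atTop_nhds_zero_of_lt_one h1γlt) hlim1
  exact le_antisymm hlim2 zero_le
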